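/- 2N/log = 2D/log; more strongly, 2N/log ⊆ 1D, i.e., every family of promise problems solvable by a polynomial-size family of 2nfa's and having a logarithmic ceiling is solvable by a polynomial-size family of 1dfa's. -/

import Mathlib

/-! ## One-way nondeterministic finite automata -/

structure OneNFA (α : Type) : Type 1 where
  Q : Type
  [finQ : Fintype Q]
  start : Q
  next : Q → α → Set Q
  next_nonempty : ∀ q a, (next q a).Nonempty
  acc : Set Q

attribute [instance] OneNFA.finQ

namespace OneNFA

variable {α : Type}

/-- The state complexity (number of inner states). -/
def sc (M : OneNFA α) : ℕ := Fintype.card M.Q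

/-- `p` is a computation path of `M` on input `x`. -/
def IsPath (M : OneNFA α) (x : List α) (p : Fin (x.length + 1) → M.Q) : Prop :=
  p 0 = M.start ∧ ∀ i : Fin x.length, p i.succ ∈ M.next (p i.castSucc) (x.get i)

/-- `p` is an accepting computation path of `M` on input `x`. -/
def IsAccPath (M : OneNFA α) (x : List α) (p : Fin (x.length + 1) → M.Q) : Prop :=
  M.IsPath x p ∧ p (Fin.last x.length) ∈ M.acc

def Accepts (M : OneNFA α) (x : List α) : Prop := ∃ p, M.IsAccPath x p

/-- `M` is a 1dfa: every transition set is a singleton. -/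
def Deterministic (M : OneNFA α) : Prop := ∀ q a, ∃ q', M.next q a = {q'}

end OneNFA

/-! ## Families of promise problems -/

structure PromiseFamily (α : Type) where
  pos : ℕ → Set (List α)
  neg : ℕ → Set (List α)
  disj : ∀ n, Disjoint (pos n) (neg n)

namespace PromiseFamily

def valid {α : Type} (L : PromiseFamily α) (n : ℕ) : Set (List α) := L.pos n ∪ L.neg n

def co {α : Type} (L : PromiseFamily α) : PromiseFamily α :=
  ⟨L.neg, L.pos, fun n => (L.disj n).symm⟩

end PromiseFamily

/-- A family of promise problems over some finite alphabet. -/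
structure Family : Type 1 where
  alph : Type
  [finA : Fintype alph]
  prob : PromiseFamily alph

attribute [instance] Family.finA

def Family.co (F : Family) : Family := { alph := F.alph, prob := F.prob.co }

/-! ## One-way machine families -/

def Solves1 {α : Type} (M : ℕ → OneNFA α) (L : PromiseFamily α) : Prop :=
  ∀ n, (∀ x ∈ L.pos n, (M n).Accepts x) ∧ (∀ x ∈ L.neg n, ¬ (M n).Accepts x)

def PolySize1 {α : Type} (M : ℕ → OneNFA α) : Prop :=
  ∃ p : Polynomial ℕ, ∀ n, (M n).sc ≤ p.eval n

def Unambiguous1 {α : Type} (M : ℕ → OneNFA α) (L : PromiseFamily α) : Prop :=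
  ∀ n, ∀ x ∈ L.valid n, {p | (M n).IsAccPath x p}.Subsingleton

def AcceptFew1 {α : Type} (M : ℕ → OneNFA α) (L : PromiseFamily α) : Prop :=
  ∃ P : MvPolynomial (Fin 2) ℕ, ∀ n, ∀ x ∈ L.valid n,
    {p | (M n).IsAccPath x p}.ncard ≤ MvPolynomial.eval ![n, x.length] P

def WeaklyUnambiguous1 {α : Type} (M : ℕ → OneNFA α) (L : PromiseFamily α) : Prop :=
  ∀ n, ∀ x ∈ L.valid n, ∀ q : (M n).Q,
    {p | (M n).IsAccPath x p ∧ p (Fin.last x.length) = q}.Subsingleton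

def ReachUnambiguous1 {α : Type} (M : ℕ → OneNFA α) (L : PromiseFamily α) : Prop :=
  ∀ n, ∀ x ∈ L.valid n, ∀ i ≤ x.length, ∀ q : (M n).Q,
    {p : Fin ((x.take i).length + 1) → (M n).Q |
      (M n).IsPath (x.take i) p ∧ p (Fin.last (x.take i).length) = q}.Subsingleton

def ReachFew1 {α : Type} (M : ℕ → OneNFA α) (L : PromiseFamily α) : Prop :=
  ∃ P : MvPolynomial (Fin 2) ℕ, ∀ n, ∀ x ∈ L.valid n, ∀ i ≤ x.length, ∀ q : (M n).Q,
    {p : Fin ((x.take i).length + 1) → (M n).Q |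
      (M n).IsPath (x.take i) p ∧ p (Fin.last (x.take i).length) = q}.ncard ≤
      MvPolynomial.eval ![n, x.length] P

/-! ## One-way nonuniform state complexity classes -/

def oneN : Set Family :=
  {F | ∃ M : ℕ → OneNFA F.alph, PolySize1 M ∧ Solves1 M F.prob}

def oneD : Set Family :=
  {F | ∃ M : ℕ → OneNFA F.alph, PolySize1 M ∧ (∀ n, (M n).Deterministic) ∧ Solves1 M F.prob}

def oneU : Set Family :=
  {F | ∃ M : ℕ → OneNFA F.alph, PolySize1 M ∧ Unambiguous1 M F.prob ∧ Solves1 M F.prob}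

def oneFew : Set Family :=
  {F | ∃ M : ℕ → OneNFA F.alph, PolySize1 M ∧ AcceptFew1 M F.prob ∧ Solves1 M F.prob}

def oneFewU : Set Family :=
  {F | ∃ M : ℕ → OneNFA F.alph, PolySize1 M ∧ AcceptFew1 M F.prob ∧
        WeaklyUnambiguous1 M F.prob ∧ Solves1 M F.prob}

def oneReachU : Set Family :=
  {F | ∃ M : ℕ → OneNFA F.alph, PolySize1 M ∧ AcceptFew1 M F.prob ∧
        ReachUnambiguous1 M F.prob ∧ Solves1 M F.prob}

def oneReachFew : Set Family :=
  {F | ∃ M : ℕ → OneNFA F.alph, PolySize1 M ∧ AcceptFew1 M F.prob ∧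
        ReachFew1 M F.prob ∧ Solves1 M F.prob}

def oneReachFewU : Set Family :=
  {F | ∃ M : ℕ → OneNFA F.alph, PolySize1 M ∧ AcceptFew1 M F.prob ∧
        ReachFew1 M F.prob ∧ WeaklyUnambiguous1 M F.prob ∧ Solves1 M F.prob}

/-- The complement class `co-C`. -/
def coC (C : Set Family) : Set Family := {F | F.co ∈ C}
/-! ## Two-way nondeterministic finite automata -/

/-- A tape symbol: either an input symbol, the left endmarker `Sum.inr false`,
or the right endmarker `Sum.inr true`. -/
def TapeSym (α : Type) : Type := α ⊕ Bool

/-- The symbol held in cell `i` of the tape containing `▷x◁`. -/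
def tapeAt {α : Type} (x : List α) (i : ℕ) : TapeSym α :=
  if h0 : i = 0 then Sum.inr false
  else if h : i ≤ x.length then Sum.inl (x.get ⟨i - 1, by omega⟩)
  else Sum.inr true

structure TwoNFA (α : Type) : Type 1 where
  Q : Type
  [finQ : Fintype Q]
  start : Q
  acc : Set Q
  rej : Set Q
  acc_rej_disj : Disjoint acc rej
  next : Q → TapeSym α → Set (Q × ℤ)
  next_dir : ∀ q a t, t ∈ next q a → t.2 = -1 ∨ t.2 = 0 ∨ t.2 = 1

attribute [instance] TwoNFA.finQ

namespace TwoNFA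

variable {α : Type}

def sc (M : TwoNFA α) : ℕ := Fintype.card M.Q

def Halting (M : TwoNFA α) (q : M.Q) : Prop := q ∈ M.acc ∨ q ∈ M.rej

/-- Configuration `c` yields configuration `c'` in one step on input `x`. -/
def Yields (M : TwoNFA α) (x : List α) (c c' : M.Q × ℕ) : Prop :=
  ¬ M.Halting c.1 ∧ c.2 ≤ x.length + 1 ∧ c'.2 ≤ x.length + 1 ∧
    ∃ d : ℤ, (c'.1, d) ∈ M.next c.1 (tapeAt x c.2) ∧ (c'.2 : ℤ) = (c.2 : ℤ) + d

/-- A partial computation path of length `k` of `M` on `x`. -/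
def IsPartialPath (M : TwoNFA α) (x : List α) (k : ℕ) (p : Fin (k + 1) → M.Q × ℕ) : Prop :=
  p 0 = (M.start, 0) ∧ ∀ i : Fin k, M.Yields x (p i.castSucc) (p i.succ)

/-- A (full) computation path: the final configuration is the only halting one. -/
def IsCompPath (M : TwoNFA α) (x : List α) (k : ℕ) (p : Fin (k + 1) → M.Q × ℕ) : Prop :=
  M.IsPartialPath x k p ∧ ∀ i : Fin (k + 1), (M.Halting (p i).1 ↔ i = Fin.last k)

def IsAccPath (M : TwoNFA α) (x : List α) (k : ℕ) (p : Fin (k + 1) → M.Q × ℕ) : Prop :=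
  M.IsCompPath x k p ∧ (p (Fin.last k)).1 ∈ M.acc

def Accepts (M : TwoNFA α) (x : List α) : Prop := ∃ k p, M.IsAccPath x k p

def Deterministic (M : TwoNFA α) : Prop := ∀ q a, ∃ t, M.next q a = {t}

/-- The set of accepting computation paths of `M` on `x`. -/
def accPaths (M : TwoNFA α) (x : List α) : Set ((k : ℕ) × (Fin (k + 1) → M.Q × ℕ)) :=
  {kp | M.IsAccPath x kp.1 kp.2}

/-- The set of computation paths of `M` on `x` ending at configuration `conf`. -/
def compPathsTo (M : TwoNFA α) (x : List α) (conf : M.Q × ℕ) :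
    Set ((k : ℕ) × (Fin (k + 1) → M.Q × ℕ)) :=
  {kp | M.IsCompPath x kp.1 kp.2 ∧ kp.2 (Fin.last kp.1) = conf}

/-- The set of partial computation paths of `M` on `x` ending at configuration `conf`. -/
def partialPathsTo (M : TwoNFA α) (x : List α) (conf : M.Q × ℕ) :
    Set ((k : ℕ) × (Fin (k + 1) → M.Q × ℕ)) :=
  {kp | M.IsPartialPath x kp.1 kp.2 ∧ kp.2 (Fin.last kp.1) = conf}

end TwoNFA

/-! ## Two-way machine families -/

def Solves2 {α : Type} (M : ℕ → TwoNFA α) (L : PromiseFamily α) : Prop :=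
  ∀ n, (∀ x ∈ L.pos n, (M n).Accepts x) ∧ (∀ x ∈ L.neg n, ¬ (M n).Accepts x)

def PolySize2 {α : Type} (M : ℕ → TwoNFA α) : Prop :=
  ∃ p : Polynomial ℕ, ∀ n, (M n).sc ≤ p.eval n

def Unambiguous2 {α : Type} (M : ℕ → TwoNFA α) (L : PromiseFamily α) : Prop :=
  ∀ n, ∀ x ∈ L.valid n, ((M n).accPaths x).Subsingleton

def AcceptFew2 {α : Type} (M : ℕ → TwoNFA α) (L : PromiseFamily α) : Prop :=
  ∃ P : MvPolynomial (Fin 2) ℕ, ∀ n, ∀ x ∈ L.valid n,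
    ((M n).accPaths x).encard ≤ (MvPolynomial.eval ![n, x.length] P : ℕ∞)

def WeaklyUnambiguous2 {α : Type} (M : ℕ → TwoNFA α) (L : PromiseFamily α) : Prop :=
  ∀ n, ∀ x ∈ L.valid n, ∀ conf : (M n).Q × ℕ, conf.1 ∈ (M n).acc →
    ((M n).compPathsTo x conf).Subsingleton

def ReachUnambiguous2 {α : Type} (M : ℕ → TwoNFA α) (L : PromiseFamily α) : Prop :=
  ∀ n, ∀ x ∈ L.valid n, ∀ conf : (M n).Q × ℕ,
    ((M n).partialPathsTo x conf).Subsingleton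

def ReachFew2 {α : Type} (M : ℕ → TwoNFA α) (L : PromiseFamily α) : Prop :=
  ∃ P : MvPolynomial (Fin 2) ℕ, ∀ n, ∀ x ∈ L.valid n, ∀ conf : (M n).Q × ℕ,
    ((M n).partialPathsTo x conf).encard ≤ (MvPolynomial.eval ![n, x.length] P : ℕ∞)

/-! ## Two-way nonuniform state complexity classes -/

def twoN : Set Family :=
  {F | ∃ M : ℕ → TwoNFA F.alph, PolySize2 M ∧ Solves2 M F.prob}

def twoD : Set Family :=
  {F | ∃ M : ℕ → TwoNFA F.alph, PolySize2 M ∧ (∀ n, (M n).Deterministic) ∧ Solves2 M F.prob}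

def twoU : Set Family :=
  {F | ∃ M : ℕ → TwoNFA F.alph, PolySize2 M ∧ Unambiguous2 M F.prob ∧ Solves2 M F.prob}

def twoFew : Set Family :=
  {F | ∃ M : ℕ → TwoNFA F.alph, PolySize2 M ∧ AcceptFew2 M F.prob ∧ Solves2 M F.prob}

def twoFewU : Set Family :=
  {F | ∃ M : ℕ → TwoNFA F.alph, PolySize2 M ∧ AcceptFew2 M F.prob ∧
        WeaklyUnambiguous2 M F.prob ∧ Solves2 M F.prob}

def twoReachU : Set Family :=
  {F | ∃ M : ℕ → TwoNFA F.alph, PolySize2 M ∧ AcceptFew2 M F.prob ∧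
        ReachUnambiguous2 M F.prob ∧ Solves2 M F.prob}

def twoReachFew : Set Family :=
  {F | ∃ M : ℕ → TwoNFA F.alph, PolySize2 M ∧ AcceptFew2 M F.prob ∧
        ReachFew2 M F.prob ∧ Solves2 M F.prob}

def twoReachFewU : Set Family :=
  {F | ∃ M : ℕ → TwoNFA F.alph, PolySize2 M ∧ AcceptFew2 M F.prob ∧
        ReachFew2 M F.prob ∧ WeaklyUnambiguous2 M F.prob ∧ Solves2 M F.prob}

/-! ## Ceilings -/

/-- The family `F` has an `f(n)`-ceiling. -/
def HasCeiling (F : Family) (f : ℕ → ℕ) : Prop :=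
  ∀ n, ∀ x ∈ F.prob.valid n, x.length ≤ f n

/-- The restriction `C/F` of a class `C` to families having an `f`-ceiling for some `f ∈ S`. -/
def ceil (C : Set Family) (S : Set (ℕ → ℕ)) : Set Family :=
  {F | F ∈ C ∧ ∃ f ∈ S, HasCeiling F f}

def polyFuns : Set (ℕ → ℕ) := {f | ∃ p : Polynomial ℕ, ∀ n, f n = p.eval n}

/-- Super-exponential functions: `f(n) > 2^{p(n)}` for all but finitely many `n`,
for every polynomial `p`. -/
def supexpFuns : Set (ℕ → ℕ) :=
  {f | ∀ p : Polynomial ℕ, ∃ N, ∀ n ≥ N, 2 ^ p.eval n < f n}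

/-- `F` has a logarithmic ceiling `ℓ(n) = a·log₂ n + b` with constants `a, b ≥ 0`. -/
def HasLogCeiling (F : Family) : Prop :=
  ∃ a b : ℝ, 0 ≤ a ∧ 0 ≤ b ∧
    ∀ n, ∀ x ∈ F.prob.valid n, (x.length : ℝ) ≤ a * Real.logb 2 n + b

/-- The restriction `C/log` of a class `C` to families having logarithmic ceilings. -/
def ceilLog (C : Set Family) : Set Family := {F | F ∈ C ∧ HasLogCeiling F}
/-! ## The alphabet `{0, 1, #}` and encodings -/

inductive Sym3 : Type
  | zero | one | hash
deriving DecidableEq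

instance : Fintype Sym3 :=
  ⟨{Sym3.zero, Sym3.one, Sym3.hash}, by intro x; cases x <;> simp⟩

/-- The block `1^i 0^{m-i}`. -/
def block (m i : ℕ) : List Sym3 :=
  List.replicate i Sym3.one ++ List.replicate (m - i) Sym3.zero

lemma block_length {m i : ℕ} (h : i ≤ m) : (block m i).length = m := by
  simp [block]; omega

lemma block_count {m : ℕ} (i : ℕ) : (block m i).count Sym3.one = i := by
  simp [block, List.count_append, List.count_replicate]

lemma block_inj {m i j : ℕ} (h : block m i = block m j) : i = j := by
  have := block_count (m := m) i
  rw [h, block_count] at this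
  omega

/-- The encoding `[[i₁,…,i_k]]_m` of a list of numbers. -/
def enc (m : ℕ) : List ℕ → List Sym3
  | [] => []
  | [i] => block m i
  | i :: j :: rest => block m i ++ Sym3.zero :: enc m (j :: rest)

/-- Lists of length `k` with entries in `[n]`. -/
def ValidList (n k : ℕ) (l : List ℕ) : Prop :=
  l.length = k ∧ ∀ i ∈ l, 1 ≤ i ∧ i ≤ n

lemma enc_length {m : ℕ} :
    ∀ l : List ℕ, (∀ i ∈ l, i ≤ m) → (enc m l).length = l.length * (m + 1) - 1
  | [] => by simp [enc]
  | [i] => by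
      intro h
      simp [enc, block_length (h i (by simp))]
  | i :: j :: rest => by
      intro h
      have ih := enc_length (j :: rest) (fun a ha => h a (List.mem_cons_of_mem _ ha))
      have hb : (block m i).length = m := block_length (h i (List.mem_cons_self))
      show (block m i ++ Sym3.zero :: enc m (j :: rest)).length = _
      rw [List.length_append, hb, List.length_cons, ih]
      have hc : (i :: j :: rest).length = (j :: rest).length + 1 := by simp
      rw [hc]
      set L := (j :: rest).length with hLdef
      have hL : 1 ≤ L := by simp [hLdef]
      have h1 : (L + 1) * (m + 1) = L * (m + 1) + (m + 1) := by ring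
      rw [h1]
      set P := L * (m + 1) with hPdef
      have hP : 1 ≤ P := by
        have := Nat.mul_le_mul hL (Nat.le_add_left 1 m)
        simpa [hPdef] using this
      omega

lemma enc_ne_nil {m : ℕ} (i : ℕ) (rest : List ℕ) (hi : 1 ≤ i) :
    enc m (i :: rest) ≠ [] := by
  cases rest with
  | nil =>
      simp only [enc, block]
      intro h
      have := congrArg List.length h
      simp at this
      omega
  | cons j rest' =>
      simp only [enc]
      intro h
      have := congrArg List.length h
      simp at this

lemma enc_inj {m : ℕ} :
    ∀ u w : List ℕ, (∀ i ∈ u, 1 ≤ i ∧ i ≤ m) → (∀ i ∈ w, 1 ≤ i ∧ i ≤ m) →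
      enc m u = enc m w → u = w
  | [], [], _, _, _ => rfl
  | [], j :: w', _, hw, h => by
      exact absurd h.symm (enc_ne_nil j w' (hw j (by simp)).1)
  | i :: u', [], hu, _, h => by
      exact absurd h (enc_ne_nil i u' (hu i (by simp)).1)
  | [i], [j], hu, hw, h => by
      simp only [enc] at h
      rw [block_inj h]
  | [i], j :: b :: w', hu, hw, h => by
      exfalso
      have hl := congrArg List.length h
      rw [show enc m [i] = block m i from rfl,
        show enc m (j :: b :: w') = block m j ++ Sym3.zero :: enc m (b :: w') from rfl] at hl
      rw [List.length_append, List.length_cons,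
        block_length (hu i (by simp)).2, block_length (hw j (by simp)).2] at hl
      omega
  | i :: a :: u', [j], hu, hw, h => by
      exfalso
      have hl := congrArg List.length h
      rw [show enc m [j] = block m j from rfl,
        show enc m (i :: a :: u') = block m i ++ Sym3.zero :: enc m (a :: u') from rfl] at hl
      rw [List.length_append, List.length_cons,
        block_length (hu i (by simp)).2, block_length (hw j (by simp)).2] at hl
      omega
  | i :: a :: u', j :: b :: w', hu, hw, h => by
      rw [show enc m (i :: a :: u') = block m i ++ Sym3.zero :: enc m (a :: u') from rfl,
        show enc m (j :: b :: w') = block m j ++ Sym3.zero :: enc m (b :: w') from rfl] at h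
      have hlen : (block m i).length = (block m j).length := by
        rw [block_length (hu i (by simp)).2, block_length (hw j (by simp)).2]
      obtain ⟨h1, h2⟩ := List.append_inj h hlen
      have h3 : enc m (a :: u') = enc m (b :: w') := by
        simpa using h2
      have ih := enc_inj (a :: u') (b :: w')
        (fun x hx => hu x (List.mem_cons_of_mem _ hx))
        (fun x hx => hw x (List.mem_cons_of_mem _ hx)) h3
      rw [block_inj h1, ih]
/-! ## The promise problem family `L₁` -/

def L1pos (n : ℕ) : Set (List Sym3) :=
  {x | ∃ u v : List ℕ, ValidList n n u ∧ ValidList n n v ∧ u ≠ v ∧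
        x = enc n u ++ Sym3.hash :: enc n v}

def L1neg (n : ℕ) : Set (List Sym3) :=
  {x | ∃ u v : List ℕ, ValidList n n u ∧ ValidList n n v ∧ u = v ∧
        x = enc n u ++ Sym3.hash :: enc n v}

lemma L1_disj (n : ℕ) : Disjoint (L1pos n) (L1neg n) := by
  rw [Set.disjoint_left]
  rintro x ⟨u, v, hu, hv, huv, rfl⟩ ⟨u', v', hu', hv', huv', heq⟩
  have hlen : (enc n u).length = (enc n u').length := by
    rw [enc_length u (fun i hi => (hu.2 i hi).2),
      enc_length u' (fun i hi => (hu'.2 i hi).2), hu.1, hu'.1]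
  obtain ⟨h1, h2⟩ := List.append_inj heq hlen
  have h2' : enc n v = enc n v' := by simpa using h2
  have e1 : u = u' := enc_inj u u' hu.2 hu'.2 h1
  have e2 : v = v' := enc_inj v v' hv.2 hv'.2 h2'
  exact huv (by rw [e1, e2, huv'])

def L1prob : PromiseFamily Sym3 := ⟨L1pos, L1neg, L1_disj⟩

def L1fam : Family := { alph := Sym3, prob := L1prob }

/-! ## Matrices, their encodings, and the promise problem family `L₂` -/

/-- `R` represents an `n × n` matrix with entries in `[n]`, given as its list of rows. -/
def ValidMat (n : ℕ) (R : List (List ℕ)) : Prop :=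
  R.length = n ∧ ∀ r ∈ R, ValidList n n r

/-- The encoding `[[D]]_n` of a matrix: its encoded rows joined by `#`. -/
def encMat (n : ℕ) : List (List ℕ) → List Sym3
  | [] => []
  | [r] => enc n r
  | r :: s :: rest => enc n r ++ Sym3.hash :: encMat n (s :: rest)

lemma encMat_len {n : ℕ} :
    ∀ R : List (List ℕ), (∀ r ∈ R, ValidList n n r) →
      (encMat n R).length = R.length * (n * (n + 1) - 1 + 1) - 1
  | [] => by simp [encMat]
  | [r] => by
      intro h
      have hr := h r (by simp)
      have he : (enc n r).length = n * (n + 1) - 1 := by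
        rw [enc_length r (fun i hi => (hr.2 i hi).2), hr.1]
      show (enc n r).length = ([r] : List (List ℕ)).length * (n * (n + 1) - 1 + 1) - 1
      rw [he, show ([r] : List (List ℕ)).length = 1 from rfl]
      omega
  | r :: s :: rest => by
      intro h
      have ih := encMat_len (s :: rest) (fun a ha => h a (List.mem_cons_of_mem _ ha))
      have hr := h r (by simp)
      have he : (enc n r).length = n * (n + 1) - 1 := by
        rw [enc_length r (fun i hi => (hr.2 i hi).2), hr.1]
      show (enc n r ++ Sym3.hash :: encMat n (s :: rest)).length = _
      rw [List.length_append, he, List.length_cons, ih]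
      have hc : (r :: s :: rest).length = (s :: rest).length + 1 := by simp
      rw [hc]
      set e := n * (n + 1) - 1 with hedef
      set L := (s :: rest).length with hLdef
      have hL : 1 ≤ L := by simp [hLdef]
      have h1 : (L + 1) * (e + 1) = L * (e + 1) + (e + 1) := by ring
      rw [h1]
      set P := L * (e + 1) with hPdef
      have hP : 1 ≤ P := by
        calc 1 = 1 * 1 := by ring
        _ ≤ L * (e + 1) := Nat.mul_le_mul hL (by omega)
      omega

lemma encMat_inj {n : ℕ} :
    ∀ R W : List (List ℕ), (∀ r ∈ R, ValidList n n r) → (∀ r ∈ W, ValidList n n r) →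
      R.length = W.length → encMat n R = encMat n W → R = W
  | [], [], _, _, _, _ => rfl
  | [], _ :: _, _, _, hl, _ => by
      simp only [List.length_cons, List.length_nil] at hl
      omega
  | _ :: _, [], _, _, hl, _ => by
      simp only [List.length_cons, List.length_nil] at hl
      omega
  | [r], [w], hR, hW, _, h => by
      have := enc_inj r w (hR r (by simp)).2 (hW w (by simp)).2 h
      rw [this]
  | [r], w :: w' :: W', _, _, hl, _ => by
      simp only [List.length_cons, List.length_nil] at hl
      omega
  | r :: r' :: R', [w], _, _, hl, _ => by
      simp only [List.length_cons, List.length_nil] at hl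
      omega
  | r :: r' :: R', w :: w' :: W', hR, hW, hl, h => by
      rw [show encMat n (r :: r' :: R') = enc n r ++ Sym3.hash :: encMat n (r' :: R') from rfl,
        show encMat n (w :: w' :: W') = enc n w ++ Sym3.hash :: encMat n (w' :: W') from rfl] at h
      have hrlen : (enc n r).length = (enc n w).length := by
        have h1 := hR r (by simp); have h2 := hW w (by simp)
        rw [enc_length r (fun i hi => (h1.2 i hi).2),
          enc_length w (fun i hi => (h2.2 i hi).2), h1.1, h2.1]
      obtain ⟨h1, h2⟩ := List.append_inj h hrlen
      have h3 : encMat n (r' :: R') = encMat n (w' :: W') := by simpa using h2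
      have ihr := enc_inj r w (hR r (by simp)).2 (hW w (by simp)).2 h1
      have ih := encMat_inj (r' :: R') (w' :: W')
        (fun a ha => hR a (List.mem_cons_of_mem _ ha))
        (fun a ha => hW a (List.mem_cons_of_mem _ ha))
        (by simpa using hl) h3
      rw [ihr, ih]

/-- `SelSum R s` holds iff `s` is obtained by choosing one entry from each row of `R`
(the value `sum_D(σ)` for some choice function `σ`). -/
inductive SelSum : List (List ℕ) → ℕ → Prop
  | nil : SelSum [] 0
  | cons {a : ℕ} {r : List ℕ} {rest : List (List ℕ)} {s : ℕ} :
      a ∈ r → SelSum rest s → SelSum (r :: rest) (a + s)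

def L2pos (n : ℕ) : Set (List Sym3) :=
  {x | ∃ R R' : List (List ℕ), ValidMat n R ∧ ValidMat n R' ∧
        (∃ s : ℕ, SelSum R s ∧ SelSum R' s) ∧
        x = encMat n R ++ Sym3.hash :: Sym3.hash :: encMat n R'}

def L2neg (n : ℕ) : Set (List Sym3) :=
  {x | ∃ R R' : List (List ℕ), ValidMat n R ∧ ValidMat n R' ∧
        (∀ s s' : ℕ, SelSum R s → SelSum R' s' → s ≠ s') ∧
        x = encMat n R ++ Sym3.hash :: Sym3.hash :: encMat n R'}

lemma L2_disj (n : ℕ) : Disjoint (L2pos n) (L2neg n) := by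
  rw [Set.disjoint_left]
  rintro x ⟨R, R', hR, hR', ⟨s, hs, hs'⟩, rfl⟩ ⟨W, W', hW, hW', hne, heq⟩
  have hlen : (encMat n R).length = (encMat n W).length := by
    rw [encMat_len R hR.2, encMat_len W hW.2, hR.1, hW.1]
  obtain ⟨h1, h2⟩ := List.append_inj heq hlen
  have h2' : encMat n R' = encMat n W' := by simpa using h2
  have e1 : R = W := encMat_inj R W hR.2 hW.2 (by rw [hR.1, hW.1]) h1
  have e2 : R' = W' := encMat_inj R' W' hR'.2 hW'.2 (by rw [hR'.1, hW'.1]) h2'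
  exact hne s s (e1 ▸ hs) (e2 ▸ hs') rfl

def L2prob : PromiseFamily Sym3 := ⟨L2pos, L2neg, L2_disj⟩

def L2fam : Family := { alph := Sym3, prob := L2prob }
/-! ## One-way probabilistic finite automata data -/

/-- Product of the matrices of the symbols of a word. -/
noncomputable def wordMatrix {α Q : Type} [Fintype Q] [DecidableEq Q]
    (Mσ : TapeSym α → Matrix Q Q ℝ) (w : List (TapeSym α)) : Matrix Q Q ℝ :=
  (w.map Mσ).prod

/-- The tape word `▷ x ◁`. -/
def tapeWord {α : Type} (x : List α) : List (TapeSym α) :=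
  Sum.inr false :: (x.map Sum.inl ++ [Sum.inr true])

/-- `p_{acc}(x : q)`: the `q`-entry of the row vector `ν · M_{▷x◁}`. -/
noncomputable def pacc {α Q : Type} [Fintype Q] [DecidableEq Q]
    (ν : Q → ℝ) (Mσ : TapeSym α → Matrix Q Q ℝ) (x : List α) (q : Q) : ℝ :=
  Matrix.vecMul ν (wordMatrix Mσ (tapeWord x)) q

/-! ### Auxiliary: a 1dfa memorizing short inputs -/

noncomputable instance memoFin {α : Type} [Fintype α] (L : ℕ) :
    Fintype {l : List α // l.length ≤ L} :=
  (List.finite_length_le (α := α) (n := L)).fintype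

def memoNext {α : Type} (L : ℕ) :
    Option {l : List α // l.length ≤ L} → α → Option {l : List α // l.length ≤ L}
  | none, _ => none
  | some ⟨l, _⟩, a =>
      if h : l.length + 1 ≤ L then some ⟨l ++ [a], by simpa using h⟩ else none

noncomputable def memoDFA {α : Type} [Fintype α] (L : ℕ) (A : Set (List α)) : OneNFA α where
  Q := Option {l : List α // l.length ≤ L}
  start := some ⟨[], by simp⟩
  next q a := {memoNext L q a}
  next_nonempty := fun _ _ => ⟨_, rfl⟩
  acc := {q | ∃ l : {l : List α // l.length ≤ L}, q = some l ∧ l.1 ∈ A}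

lemma memoDFA_det {α : Type} [Fintype α] (L : ℕ) (A : Set (List α)) :
    (memoDFA L A).Deterministic := fun q a => ⟨memoNext L q a, rfl⟩

lemma memoNext_take {α : Type} {L : ℕ} {x : List α} {i : ℕ} (hi : i < x.length)
    (h : (x.take i).length ≤ L) (h' : (x.take (i + 1)).length ≤ L)
    (hL : (x.take i).length + 1 ≤ L) :
    memoNext L (some ⟨x.take i, h⟩) (x.get ⟨i, hi⟩) = some ⟨x.take (i + 1), h'⟩ := by
  simp only [memoNext, hL, dif_pos]
  congr 1
  apply Subtype.ext
  show x.take i ++ [x.get ⟨i, hi⟩] = x.take (i + 1)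
  exact List.take_concat_get' x i hi

lemma memo_card_le {α : Type} [Fintype α] (L : ℕ) :
    Fintype.card {l : List α // l.length ≤ L} ≤ (Fintype.card α + 1) ^ (L + 1) := by
  classical
  have hinj : Function.Injective
      (fun l : {l : List α // l.length ≤ L} => (fun i : Fin (L + 1) => l.1[i.val]?)) := by
    rintro ⟨l₁, h₁⟩ ⟨l₂, h₂⟩ h
    have h' : ∀ i : Fin (L + 1), l₁[i.val]? = l₂[i.val]? := fun i => congrFun h i
    apply Subtype.ext
    show l₁ = l₂
    apply List.ext_getElem?
    intro i
    by_cases hi : i < L + 1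
    · exact h' ⟨i, hi⟩
    · rw [List.getElem?_eq_none (by omega), List.getElem?_eq_none (by omega)]
  calc Fintype.card {l : List α // l.length ≤ L}
      ≤ Fintype.card (Fin (L + 1) → Option α) := Fintype.card_le_of_injective _ hinj
    _ = (Fintype.card α + 1) ^ (L + 1) := by simp [Fintype.card_option]

lemma memo_sc {α : Type} [Fintype α] (L : ℕ) (A : Set (List α)) :
    (memoDFA L A).sc ≤ (Fintype.card α + 1) ^ (L + 1) + 1 := by
  have h1 : (memoDFA L A).sc = Fintype.card {l : List α // l.length ≤ L} + 1 := by
    simpa [OneNFA.sc, memoDFA] using Fintype.card_option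
  have h2 := memo_card_le (α := α) L
  omega

lemma memo_path {α : Type} [Fintype α] {L : ℕ} {A : Set (List α)} {x : List α}
    (hx : x.length ≤ L) {p : Fin (x.length + 1) → (memoDFA L A).Q}
    (hp : (memoDFA L A).IsPath x p) :
    ∀ i : Fin (x.length + 1),
      p i = some ⟨x.take i.val, by simp; omega⟩ := by
  intro i
  obtain ⟨j, hj⟩ := i
  induction j with
  | zero => exact hp.1
  | succ j ih =>
      have hj' : j < x.length := by omega
      have hstep := hp.2 ⟨j, hj'⟩
      have hprev := ih (by omega)
      rw [show (⟨j, hj'⟩ : Fin x.length).castSucc = ⟨j, by omega⟩ from rfl, hprev] at hstep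
      simp only [memoDFA, Set.mem_singleton_iff] at hstep
      rw [show (⟨j, hj'⟩ : Fin x.length).succ = ⟨j + 1, hj⟩ from rfl] at hstep
      rw [memoNext_take hj' _ (by simp; omega) (by simp; omega)] at hstep
      exact hstep

lemma memo_accepts {α : Type} [Fintype α] {L : ℕ} {A : Set (List α)} {x : List α}
    (hx : x.length ≤ L) : (memoDFA L A).Accepts x ↔ x ∈ A := by
  constructor
  · rintro ⟨p, hp, hacc⟩
    have := memo_path hx hp (Fin.last x.length)
    rw [this] at hacc
    obtain ⟨l, hl, hmem⟩ := hacc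
    obtain rfl := Option.some_injective _ hl
    simpa using hmem
  · intro hA
    refine ⟨fun i => some ⟨x.take i.val, by simp; omega⟩, ⟨rfl, ?_⟩, ?_⟩
    · intro i
      simp only [memoDFA, Set.mem_singleton_iff]
      exact (memoNext_take i.2 _ _ (by simp; have := i.2; omega)).symm
    · exact ⟨⟨x.take x.length, by simpa using hx⟩, rfl, by simpa using hA⟩

/-! ### Polynomial size of the memorizing dfa under a log ceiling -/

lemma logb_le_natlog (n : ℕ) (hn : 1 ≤ n) :
    Real.logb 2 n ≤ (Nat.log 2 n : ℝ) + 1 := by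
  have h1 : (n : ℝ) ≤ (2 : ℝ) ^ (Nat.log 2 n + 1) := by
    exact_mod_cast (Nat.lt_pow_succ_log_self one_lt_two n).le
  calc Real.logb 2 n ≤ Real.logb 2 ((2 : ℝ) ^ (Nat.log 2 n + 1)) :=
        Real.logb_le_logb_of_le (by norm_num) (by exact_mod_cast hn) h1
    _ = (Nat.log 2 n : ℝ) + 1 := by
        rw [Real.logb_pow, Real.logb_self_eq_one (by norm_num)]
        push_cast; ring

lemma logceil_le (a b : ℝ) (ha : 0 ≤ a) (n : ℕ) :
    ⌈a * Real.logb 2 n + b⌉₊ ≤ ⌈a⌉₊ * (Nat.log 2 n + 1) + ⌈b⌉₊ := by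
  rw [Nat.ceil_le]
  push_cast
  have hb := Nat.le_ceil b
  have key : a * Real.logb 2 n ≤ (⌈a⌉₊ : ℝ) * ((Nat.log 2 n : ℝ) + 1) := by
    rcases Nat.eq_zero_or_pos n with rfl | hn
    · simp only [Nat.cast_zero, Real.logb_zero, mul_zero]
      positivity
    · have hl0 : 0 ≤ Real.logb 2 n :=
        Real.logb_nonneg (by norm_num) (by exact_mod_cast hn)
      exact mul_le_mul (Nat.le_ceil a) (logb_le_natlog n hn) hl0 (Nat.cast_nonneg _)
  linarith

lemma pow_log_poly (d e K : ℕ) (hd : 1 ≤ d) (A B : ℕ)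
    (he : Nat.clog 2 (d ^ A) + 1 ≤ e) (hK : d ^ (A + B + 1) ≤ K)
    (n : ℕ) (hn : 1 ≤ n) :
    d ^ (A * (Nat.log 2 n + 1) + B + 1) ≤ K * n ^ e := by
  set k := Nat.log 2 n with hk
  have h1 : d ^ (A * (k + 1) + B + 1) = (d ^ A) ^ k * d ^ (A + B + 1) := by
    rw [← pow_mul, ← pow_add]; ring_nf
  have h2 : (d ^ A) ^ k ≤ (2 ^ Nat.clog 2 (d ^ A)) ^ k :=
    Nat.pow_le_pow_left (Nat.le_pow_clog one_lt_two _) k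
  have h3 : (2 ^ Nat.clog 2 (d ^ A)) ^ k = (2 ^ k) ^ Nat.clog 2 (d ^ A) := by
    rw [← pow_mul, ← pow_mul, Nat.mul_comm]
  have h4 : (2 ^ k) ^ Nat.clog 2 (d ^ A) ≤ n ^ Nat.clog 2 (d ^ A) :=
    Nat.pow_le_pow_left (Nat.pow_log_le_self 2 (by omega)) _
  have h5 : n ^ Nat.clog 2 (d ^ A) ≤ n ^ e := Nat.pow_le_pow_right hn (by omega)
  calc d ^ (A * (k + 1) + B + 1) = (d ^ A) ^ k * d ^ (A + B + 1) := h1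
    _ ≤ n ^ e * K := Nat.mul_le_mul (le_trans h2 (le_trans (le_of_eq h3) (le_trans h4 h5))) hK
    _ = K * n ^ e := Nat.mul_comm _ _

/-- The key size bound: `(c+1)^(⌈a·log₂ n + b⌉ + 1) + 1` is polynomially bounded. -/
lemma memo_poly_bound (c : ℕ) (a b : ℝ) (ha : 0 ≤ a) :
    ∃ p : Polynomial ℕ, ∀ n : ℕ,
      (c + 1) ^ (⌈a * Real.logb 2 n + b⌉₊ + 1) + 1 ≤ p.eval n := by
  set d := c + 1 with hd
  set A := ⌈a⌉₊ with hA
  set B := ⌈b⌉₊ with hB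
  set e := Nat.clog 2 (d ^ A) + 1 with he
  set K := d ^ (A + B + 1) + 1 with hK
  refine ⟨Polynomial.C K * Polynomial.X ^ e + Polynomial.C K, fun n => ?_⟩
  have heval : (Polynomial.C K * Polynomial.X ^ e + Polynomial.C K).eval n = K * n ^ e + K := by
    simp
  rw [heval]
  have hceil := logceil_le a b ha n
  rcases Nat.eq_zero_or_pos n with rfl | hn
  · have hL : ⌈a * Real.logb 2 (0:ℕ) + b⌉₊ = B := by
      simp [Real.logb_zero, hB]
    rw [hL]
    have : d ^ (B + 1) ≤ d ^ (A + B + 1) := Nat.pow_le_pow_right (by omega) (by rw [hA, hB]; omega)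
    omega
  · have h6 : d ^ (⌈a * Real.logb 2 n + b⌉₊ + 1) ≤ d ^ (A * (Nat.log 2 n + 1) + B + 1) :=
      Nat.pow_le_pow_right (by omega) (by rw [hA, hB]; omega)
    have h7 := pow_log_poly d e (d ^ (A + B + 1)) (by omega) A B le_rfl le_rfl n hn
    have h8 : d ^ (A + B + 1) * n ^ e ≤ K * n ^ e :=
      Nat.mul_le_mul_right _ (by omega)
    omega

lemma ceil_len {a b : ℝ} {m n : ℕ} (h : (m : ℝ) ≤ a * Real.logb 2 n + b) :
    m ≤ ⌈a * Real.logb 2 n + b⌉₊ := by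
  calc m = ⌈(m : ℝ)⌉₊ := (Nat.ceil_natCast m).symm
    _ ≤ _ := Nat.ceil_mono h

lemma twoNlog_subset_oneD : ceilLog twoN ⊆ oneD := by
  rintro F ⟨⟨M, hpoly, hsolve⟩, a, b, ha, hb, hceil⟩
  refine ⟨fun n => memoDFA ⌈a * Real.logb 2 n + b⌉₊ {x | (M n).Accepts x}, ?_,
    fun n => memoDFA_det _ _, ?_⟩
  · obtain ⟨p, hp⟩ := memo_poly_bound (Fintype.card F.alph) a b ha
    exact ⟨p, fun n => le_trans (memo_sc _ _) (hp n)⟩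
  · intro n
    constructor
    · intro x hx
      have hxl := ceil_len (hceil n x (Or.inl hx))
      rw [memo_accepts hxl]
      exact (hsolve n).1 x hx
    · intro x hx
      have hxl := ceil_len (hceil n x (Or.inr hx))
      rw [memo_accepts hxl]
      exact (hsolve n).2 x hx

/-! ### Converting a 1dfa into a 2dfa -/

/-- The state of a deterministic 1nfa (with transition function `f`) after
reading the first `i` symbols of `x`. -/
def oneRun {α : Type} (M : OneNFA α) (f : M.Q → α → M.Q) (x : List α) (i : ℕ) : M.Q :=
  (x.take i).foldl f M.start

lemma oneRun_zero {α : Type} (M : OneNFA α) (f : M.Q → α → M.Q) (x : List α) :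
    oneRun M f x 0 = M.start := rfl

lemma oneRun_succ {α : Type} (M : OneNFA α) (f : M.Q → α → M.Q) {x : List α} {i : ℕ}
    (hi : i < x.length) :
    oneRun M f x (i + 1) = f (oneRun M f x i) (x.get ⟨i, hi⟩) := by
  unfold oneRun
  rw [← List.take_concat_get' x i hi, List.foldl_append]
  rfl

lemma det_accepts_iff {α : Type} {M : OneNFA α} {f : M.Q → α → M.Q}
    (hf : ∀ q a, M.next q a = {f q a}) (x : List α) :
    M.Accepts x ↔ oneRun M f x x.length ∈ M.acc := by
  constructor
  · rintro ⟨p, ⟨h0, hstep⟩, hacc⟩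
    have key : ∀ j : ℕ, ∀ hj : j < x.length + 1, p ⟨j, hj⟩ = oneRun M f x j := by
      intro j
      induction j with
      | zero => intro hj; simpa [oneRun_zero] using h0
      | succ j ih =>
          intro hj
          have hj' : j < x.length := by omega
          have hs := hstep ⟨j, hj'⟩
          rw [show (⟨j, hj'⟩ : Fin x.length).castSucc = ⟨j, by omega⟩ from rfl,
            ih (by omega), hf] at hs
          rw [show (⟨j, hj'⟩ : Fin x.length).succ = ⟨j + 1, hj⟩ from rfl] at hs
          rw [Set.mem_singleton_iff] at hs
          rw [hs, oneRun_succ M f hj']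
    have := key x.length (by omega)
    rwa [show (Fin.last x.length) = ⟨x.length, by omega⟩ from rfl, this] at hacc
  · intro hacc
    refine ⟨fun i => oneRun M f x i.val, ⟨oneRun_zero M f x, ?_⟩, ?_⟩
    · intro i
      rw [hf, Set.mem_singleton_iff]
      exact oneRun_succ M f i.2
    · exact hacc

/-- Deterministic transition of the 2dfa simulating a 1dfa. -/
def dnext {α : Type} (M : OneNFA α) (f : M.Q → α → M.Q) (bacc : M.Q → Bool) :
    (M.Q ⊕ Bool) → TapeSym α → ((M.Q ⊕ Bool) × ℤ)
  | Sum.inl q, Sum.inr false => (Sum.inl q, 1)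
  | Sum.inl q, Sum.inl a => (Sum.inl (f q a), 1)
  | Sum.inl q, Sum.inr true => (Sum.inr (bacc q), 0)
  | Sum.inr b, _ => (Sum.inr b, 0)

def dfa2 {α : Type} (M : OneNFA α) (f : M.Q → α → M.Q) (bacc : M.Q → Bool) : TwoNFA α where
  Q := M.Q ⊕ Bool
  start := Sum.inl M.start
  acc := {Sum.inr true}
  rej := {Sum.inr false}
  acc_rej_disj := by simp [Set.disjoint_left]
  next q σ := {dnext M f bacc q σ}
  next_dir := by
    rintro q σ t ht
    rw [Set.mem_singleton_iff] at ht
    subst ht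
    rcases q with q | c
    · rcases σ with a | (_ | _) <;> simp [dnext]
    · simp [dnext]

lemma dfa2_det {α : Type} (M : OneNFA α) (f : M.Q → α → M.Q) (bacc : M.Q → Bool) :
    (dfa2 M f bacc).Deterministic := fun q σ => ⟨dnext M f bacc q σ, rfl⟩

lemma dfa2_sc {α : Type} (M : OneNFA α) (f : M.Q → α → M.Q) (bacc : M.Q → Bool) :
    (dfa2 M f bacc).sc = M.sc + 2 := by
  simp only [TwoNFA.sc, dfa2, OneNFA.sc]
  exact (Fintype.card_sum).trans (by rw [Fintype.card_bool])

lemma dfa2_not_halt {α : Type} (M : OneNFA α) (f : M.Q → α → M.Q) (bacc : M.Q → Bool)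
    (q : M.Q) : ¬ (dfa2 M f bacc).Halting (Sum.inl q) := by
  simp [TwoNFA.Halting, dfa2]
  exact ⟨fun h => Sum.inl_ne_inr h, fun h => Sum.inl_ne_inr h⟩

lemma dfa2_halt {α : Type} (M : OneNFA α) (f : M.Q → α → M.Q) (bacc : M.Q → Bool)
    (b : Bool) : (dfa2 M f bacc).Halting (Sum.inr b) := by
  rcases b <;> simp [TwoNFA.Halting, dfa2]
  · exact Or.inr rfl
  · exact Or.inl rfl

lemma tapeAt_zero {α : Type} (x : List α) : tapeAt x 0 = Sum.inr false := by
  simp [tapeAt]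
  rfl

lemma tapeAt_mid {α : Type} (x : List α) {j : ℕ} (h1 : 1 ≤ j) (h2 : j ≤ x.length) :
    tapeAt x j = Sum.inl (x.get ⟨j - 1, by omega⟩) := by
  unfold tapeAt
  exact (dif_neg (by omega)).trans (dif_pos h2)

lemma tapeAt_last {α : Type} (x : List α) : tapeAt x (x.length + 1) = Sum.inr true := by
  unfold tapeAt
  exact (dif_neg (by omega)).trans (dif_neg (by omega))

/-- The canonical configuration sequence of the 2dfa on input `x`. -/
def cpath {α : Type} (M : OneNFA α) (f : M.Q → α → M.Q) (bacc : M.Q → Bool)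
    (x : List α) (j : ℕ) : (M.Q ⊕ Bool) × ℕ :=
  if j ≤ x.length + 1 then (Sum.inl (oneRun M f x (j - 1)), j)
  else (Sum.inr (bacc (oneRun M f x x.length)), x.length + 1)

lemma dfa2_yields_iff {α : Type} (M : OneNFA α) (f : M.Q → α → M.Q) (bacc : M.Q → Bool)
    (x : List α) (c c' : (dfa2 M f bacc).Q × ℕ) :
    (dfa2 M f bacc).Yields x c c' ↔
      ¬ (dfa2 M f bacc).Halting c.1 ∧ c.2 ≤ x.length + 1 ∧ c'.2 ≤ x.length + 1 ∧
        c'.1 = (dnext M f bacc c.1 (tapeAt x c.2)).1 ∧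
        (c'.2 : ℤ) = (c.2 : ℤ) + (dnext M f bacc c.1 (tapeAt x c.2)).2 := by
  constructor
  · rintro ⟨h1, h2, h3, d, hd, hpos⟩
    have hd' : (c'.1, d) = dnext M f bacc c.1 (tapeAt x c.2) := hd
    refine ⟨h1, h2, h3, ?_, ?_⟩
    · rw [← hd']
    · rw [hpos, ← hd']
  · rintro ⟨h1, h2, h3, h4, h5⟩
    refine ⟨h1, h2, h3, (dnext M f bacc c.1 (tapeAt x c.2)).2, ?_, h5⟩
    show (c'.1, (dnext M f bacc c.1 (tapeAt x c.2)).2) = dnext M f bacc c.1 (tapeAt x c.2)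
    rw [h4]
    exact Prod.mk.eta

lemma cpath_yields {α : Type} (M : OneNFA α) (f : M.Q → α → M.Q) (bacc : M.Q → Bool)
    (x : List α) {j : ℕ} (hj : j ≤ x.length + 1) :
    (dfa2 M f bacc).Yields x (cpath M f bacc x j) (cpath M f bacc x (j + 1)) := by
  set m := x.length with hm
  have hcj : cpath M f bacc x j = (Sum.inl (oneRun M f x (j - 1)), j) := if_pos hj
  refine (dfa2_yields_iff M f bacc x _ _).2 ?_
  rcases Nat.eq_zero_or_pos j with rfl | hj1
  · have hc1 : cpath M f bacc x 1 = (Sum.inl (oneRun M f x 0), 1) := if_pos (by omega)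
    rw [hcj, hc1]
    refine ⟨dfa2_not_halt M f bacc _, by omega, by omega, ?_, ?_⟩ <;>
      simp [tapeAt_zero, dnext] <;> rfl
  · obtain ⟨j', rfl⟩ : ∃ j', j = j' + 1 := ⟨j - 1, by omega⟩
    by_cases h : j' + 1 ≤ m
    · have hc1 : cpath M f bacc x (j' + 1 + 1) =
          (Sum.inl (oneRun M f x (j' + 1)), j' + 1 + 1) := if_pos (by omega)
      rw [hcj, hc1]
      refine ⟨dfa2_not_halt M f bacc _, by omega, by omega, ?_, ?_⟩
      · show Sum.inl (oneRun M f x (j' + 1)) =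
          (dnext M f bacc (Sum.inl (oneRun M f x j')) (tapeAt x (j' + 1))).1
        rw [tapeAt_mid x (by omega) h]
        exact congrArg Sum.inl (oneRun_succ M f (by omega))
      · show ((j' + 1 + 1 : ℕ) : ℤ) = ((j' + 1 : ℕ) : ℤ) +
          (dnext M f bacc (Sum.inl (oneRun M f x j')) (tapeAt x (j' + 1))).2
        rw [tapeAt_mid x (by omega) h]
        show ((j' + 1 + 1 : ℕ) : ℤ) = ((j' + 1 : ℕ) : ℤ) + 1
        push_cast; ring
    · have hjm : j' = m := by omega
      subst hjm
      have hc1 : cpath M f bacc x (m + 1 + 1) =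
          (Sum.inr (bacc (oneRun M f x m)), m + 1) := if_neg (by omega)
      rw [hcj, hc1]
      have htape : tapeAt x (m + 1) = Sum.inr true := tapeAt_last x
      refine ⟨dfa2_not_halt M f bacc _, by omega, by omega, ?_, ?_⟩
      · show Sum.inr (bacc (oneRun M f x m)) =
          (dnext M f bacc (Sum.inl (oneRun M f x (m + 1 - 1))) (tapeAt x (m + 1))).1
        rw [htape]
        show Sum.inr (bacc (oneRun M f x m)) = Sum.inr (bacc (oneRun M f x (m + 1 - 1)))
        norm_num
      · show ((m : ℕ) + 1 : ℤ) = ((m + 1 : ℕ) : ℤ) +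
          (dnext M f bacc (Sum.inl (oneRun M f x (m + 1 - 1))) (tapeAt x (m + 1))).2
        rw [htape]
        show ((m : ℕ) + 1 : ℤ) = ((m + 1 : ℕ) : ℤ) + 0
        push_cast; ring

lemma cpath_pos_le {α : Type} (M : OneNFA α) (f : M.Q → α → M.Q) (bacc : M.Q → Bool)
    (x : List α) (j : ℕ) : (cpath M f bacc x j).2 ≤ x.length + 1 := by
  unfold cpath
  split <;> simp_all

lemma dfa2_accepts_iff {α : Type} (M : OneNFA α) (f : M.Q → α → M.Q) (bacc : M.Q → Bool)
    (x : List α) :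
    (dfa2 M f bacc).Accepts x ↔ bacc (oneRun M f x x.length) = true := by
  set m := x.length with hm
  constructor
  · rintro ⟨k, p, ⟨⟨h0, hstep⟩, hhalt⟩, hacc⟩
    -- the path is forced to follow the canonical path
    have key : ∀ j : ℕ, j ≤ m + 1 → ∃ hj : j < k, p ⟨j, by omega⟩ = cpath M f bacc x j := by
      intro j
      induction j with
      | zero =>
          intro _
          have hp0 : p ⟨0, by omega⟩ = cpath M f bacc x 0 := by
            rw [show (⟨0, by omega⟩ : Fin (k+1)) = 0 from rfl, h0]
            rw [show cpath M f bacc x 0 = (Sum.inl (oneRun M f x 0), 0) from if_pos (by omega)]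
            rfl
          refine ⟨?_, hp0⟩
          -- 0 ≠ last since p 0 not halting
          have hnh : ¬ (dfa2 M f bacc).Halting (p ⟨0, by omega⟩).1 := by
            rw [hp0, show cpath M f bacc x 0 = (Sum.inl (oneRun M f x 0), 0) from
              if_pos (by omega)]
            exact dfa2_not_halt M f bacc _
          by_contra hk
          have hk0 : k = 0 := by omega
          exact hnh ((hhalt ⟨0, by omega⟩).2 (by subst hk0; rfl))
      | succ j ih =>
          intro hj
          obtain ⟨hjk, hpj⟩ := ih (by omega)
          -- determinism forces the next configuration
          have hy := hstep ⟨j, hjk⟩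
          rw [show (⟨j, hjk⟩ : Fin k).castSucc = ⟨j, by omega⟩ from rfl,
            show (⟨j, hjk⟩ : Fin k).succ = ⟨j + 1, by omega⟩ from rfl, hpj] at hy
          have hy' := cpath_yields M f bacc x (show j ≤ m + 1 by omega)
          replace hy := (dfa2_yields_iff M f bacc x _ _).1 hy
          replace hy' := (dfa2_yields_iff M f bacc x _ _).1 hy'
          have hpj1 : p ⟨j + 1, by omega⟩ = cpath M f bacc x (j + 1) := by
            have e1 := hy.2.2.2.1
            have e2 := hy.2.2.2.2
            have e1' := hy'.2.2.2.1
            have e2' := hy'.2.2.2.2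
            have : ((p ⟨j + 1, by omega⟩).2 : ℤ) = ((cpath M f bacc x (j + 1)).2 : ℤ) := by
              rw [e2, e2']
            apply Prod.ext
            · rw [e1, e1']
            · exact_mod_cast this
          refine ⟨?_, hpj1⟩
          -- if j + 1 ≤ m + 1 then p (j+1) is not halting, hence j + 1 < k
          have hnh : ¬ (dfa2 M f bacc).Halting (p ⟨j + 1, by omega⟩).1 := by
            rw [hpj1, show cpath M f bacc x (j + 1) =
              (Sum.inl (oneRun M f x (j + 1 - 1)), j + 1) from if_pos (by omega)]
            exact dfa2_not_halt M f bacc _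
          by_contra hk
          have hkj : j + 1 = k := by omega
          exact hnh ((hhalt ⟨j + 1, by omega⟩).2 (by
            apply Fin.ext; simp [Fin.last]; omega))
    -- at position m + 1 the machine halts in state inr (bacc ...)
    obtain ⟨hlt, hpm⟩ := key (m + 1) le_rfl
    have hy := hstep ⟨m + 1, hlt⟩
    rw [show (⟨m + 1, hlt⟩ : Fin k).castSucc = ⟨m + 1, by omega⟩ from rfl,
      show (⟨m + 1, hlt⟩ : Fin k).succ = ⟨m + 2, by omega⟩ from rfl, hpm] at hy
    have hy' := cpath_yields M f bacc x (show m + 1 ≤ m + 1 from le_rfl)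
    replace hy := (dfa2_yields_iff M f bacc x _ _).1 hy
    replace hy' := (dfa2_yields_iff M f bacc x _ _).1 hy'
    have hpm2 : p ⟨m + 2, by omega⟩ = cpath M f bacc x (m + 2) := by
      apply Prod.ext
      · rw [hy.2.2.2.1, hy'.2.2.2.1]
      · have : ((p ⟨m + 2, by omega⟩).2 : ℤ) = ((cpath M f bacc x (m + 2)).2 : ℤ) := by
          rw [hy.2.2.2.2, hy'.2.2.2.2]
        exact_mod_cast this
    have hc2 : cpath M f bacc x (m + 2) = (Sum.inr (bacc (oneRun M f x m)), m + 1) :=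
      if_neg (by omega)
    -- p (m+2) is halting, hence m + 2 = k
    have hhal : (dfa2 M f bacc).Halting (p ⟨m + 2, by omega⟩).1 := by
      rw [hpm2, hc2]; exact dfa2_halt M f bacc _
    have hkeq : m + 2 = k := by
      have := (hhalt ⟨m + 2, by omega⟩).1 hhal
      have := congrArg Fin.val this
      simpa [Fin.last] using this
    -- the accepting state
    have hfin : p (Fin.last k) = (Sum.inr (bacc (oneRun M f x m)), m + 1) := by
      rw [show Fin.last k = ⟨m + 2, by omega⟩ from by apply Fin.ext; simp [Fin.last]; omega,
        hpm2, hc2]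
    rw [hfin] at hacc
    have : (Sum.inr (bacc (oneRun M f x m)) : M.Q ⊕ Bool) = Sum.inr true := hacc
    simpa using this
  · intro hb
    refine ⟨m + 2, fun i => cpath M f bacc x i.val, ⟨⟨?_, ?_⟩, ?_⟩, ?_⟩
    · show cpath M f bacc x ((0 : Fin (m + 3)) : ℕ) = ((dfa2 M f bacc).start, 0)
      rw [show ((0 : Fin (m + 3)) : ℕ) = 0 from rfl,
        show cpath M f bacc x 0 = (Sum.inl (oneRun M f x 0), 0) from if_pos (by omega)]
      rfl
    · intro i
      have hi : (i : ℕ) ≤ m + 1 := by omega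
      exact cpath_yields M f bacc x hi
    · intro i
      constructor
      · intro hh
        by_contra hne
        have hi : (i : ℕ) ≤ m + 1 := by
          have := i.2
          have : (i : ℕ) ≠ m + 2 := fun h => hne (by apply Fin.ext; simp [Fin.last, h])
          omega
        have hh' : (dfa2 M f bacc).Halting (cpath M f bacc x i.val).1 := hh
        rw [show cpath M f bacc x i.val =
          (Sum.inl (oneRun M f x (i.val - 1)), i.val) from if_pos hi] at hh'
        exact dfa2_not_halt M f bacc _ hh' 
      · intro hi
        subst hi
        show (dfa2 M f bacc).Halting (cpath M f bacc x (m + 2)).1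
        rw [show cpath M f bacc x (m + 2) = (Sum.inr (bacc (oneRun M f x m)), m + 1) from
            if_neg (by omega)]
        exact dfa2_halt M f bacc _
    · show (cpath M f bacc x (m + 2)).1 ∈ (dfa2 M f bacc).acc
      rw [show cpath M f bacc x (m + 2) = (Sum.inr (bacc (oneRun M f x m)), m + 1) from
          if_neg (by omega)]
      show (Sum.inr (bacc (oneRun M f x m)) : M.Q ⊕ Bool) ∈ ({Sum.inr true} : Set _)
      rw [Set.mem_singleton_iff, hb]

lemma oneD_subset_twoD : oneD ⊆ twoD := by
  rintro F ⟨M, ⟨p, hp⟩, hdet, hsolve⟩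
  classical
  set f : ∀ n, (M n).Q → F.alph → (M n).Q := fun n q a => ((hdet n) q a).choose with hfdef
  have hf : ∀ n q a, (M n).next q a = {f n q a} := fun n q a => ((hdet n) q a).choose_spec
  set bacc : ∀ n, (M n).Q → Bool := fun n q => decide (q ∈ (M n).acc) with hbdef
  have hacc_iff : ∀ n x, (dfa2 (M n) (f n) (bacc n)).Accepts x ↔ (M n).Accepts x := by
    intro n x
    rw [dfa2_accepts_iff, det_accepts_iff (hf n) x, hbdef]
    simp
  refine ⟨fun n => dfa2 (M n) (f n) (bacc n), ⟨p + Polynomial.C 2, fun n => ?_⟩,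
    fun n => dfa2_det _ _ _, fun n => ⟨?_, ?_⟩⟩
  · rw [dfa2_sc]
    simp only [Polynomial.eval_add, Polynomial.eval_C]
    exact Nat.add_le_add_right (hp n) 2
  · intro x hx
    exact (hacc_iff n x).2 ((hsolve n).1 x hx)
  · intro x hx hax
    exact (hsolve n).2 x hx ((hacc_iff n x).1 hax)

/-- `2N/log = 2D/log`; more strongly, `2N/log ⊆ 1D`. -/
theorem twoN_log_collapse :
    ceilLog twoN = ceilLog twoD ∧ ceilLog twoN ⊆ oneD := by
  refine ⟨Set.Subset.antisymm ?_ ?_, twoNlog_subset_oneD⟩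
  · intro F hF
    exact ⟨oneD_subset_twoD (twoNlog_subset_oneD hF), hF.2⟩
  · rintro F ⟨⟨M, hp, _, hs⟩, hc⟩
    exact ⟨⟨M, hp, hs⟩, hc⟩
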